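/- Let Ω ⊂ ℝ^N be a measurable set of finite measure, t : Ω → ℝ a measurable function with 1 < t⁻ ≤ t(x) ≤ t⁺ < ∞ for a.e. x. If {fₙ} is a sequence of measurable functions on Ω with sup_n ∫_Ω |fₙ(x)|^{t(x)} dx < ∞ and fₙ(x) → f(x) a.e. in Ω, then ∫_Ω |f(x)|^{t(x)} dx < ∞ and lim_{n→∞} ∫_Ω | |fₙ|^{t(x)} − |fₙ − f|^{t(x)} − |f|^{t(x)} | dx = 0. -/

import Mathlib

open MeasureTheory Filter Topology

set_option linter.unusedVariables false


lemma key_ineq (tp : ℝ) (htp : 1 ≤ tp) {ε : ℝ} (hε : 0 < ε) :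
    ∃ K : ℝ, 0 ≤ K ∧ ∀ p : ℝ, 1 ≤ p → p ≤ tp → ∀ a b : ℝ,
      |(|a + b| ^ p - |a| ^ p)| ≤ ε * |a| ^ p + K * |b| ^ p := by
  have hadd : ContinuousAt (fun s : ℝ => 1 + s) (0:ℝ) := continuousAt_const.add continuousAt_id
  have hsub : ContinuousAt (fun s : ℝ => 1 - s) (0:ℝ) := continuousAt_const.sub continuousAt_id
  have hg1 : ContinuousAt (fun x : ℝ => x ^ tp) ((fun s : ℝ => 1 + s) 0) := by
    simp only [add_zero]; exact Real.continuousAt_rpow_const 1 tp (Or.inl one_ne_zero)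
  have hg2 : ContinuousAt (fun x : ℝ => x ^ tp) ((fun s : ℝ => 1 - s) 0) := by
    simp only [sub_zero]; exact Real.continuousAt_rpow_const 1 tp (Or.inl one_ne_zero)
  have hc1 : ContinuousAt (fun s : ℝ => (1 + s) ^ tp) 0 := hg1.comp hadd
  have hc2 : ContinuousAt (fun s : ℝ => (1 - s) ^ tp) 0 := hg2.comp hsub
  have he1 : ∀ᶠ s in 𝓝 (0:ℝ), (1 + s) ^ tp < 1 + ε := by
    have h := hc1.tendsto
    rw [show ((1:ℝ) + 0) ^ tp = 1 by simp] at h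
    exact h.eventually_lt_const (by linarith)
  have he2 : ∀ᶠ s in 𝓝 (0:ℝ), 1 - ε < (1 - s) ^ tp := by
    have h := hc2.tendsto
    rw [show ((1:ℝ) - 0) ^ tp = 1 by simp] at h
    exact h.eventually_const_lt (by linarith)
  obtain ⟨δ0, hδ0, hP⟩ := Metric.eventually_nhds_iff.1 (he1.and he2)
  set δ : ℝ := min (δ0 / 2) (1 / 2) with hδdef
  have hδpos : 0 < δ := by positivity
  have hδhalf : δ ≤ 1 / 2 := min_le_right _ _
  have hδ1 : δ < 1 := by linarith
  obtain ⟨h1, h2⟩ := hP (y := δ) (by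
    rw [Real.dist_eq, sub_zero, abs_of_pos hδpos]
    calc δ ≤ δ0 / 2 := min_le_left _ _
      _ < δ0 := by linarith)
  have hK0 : (0:ℝ) ≤ (1 + 1 / δ) ^ tp + (1 / δ) ^ tp := by positivity
  refine ⟨(1 + 1 / δ) ^ tp + (1 / δ) ^ tp, hK0, ?_⟩
  intro p hp1 hptp a b
  have hap : (0:ℝ) ≤ |a| ^ p := Real.rpow_nonneg (abs_nonneg _) _
  have hbp : (0:ℝ) ≤ |b| ^ p := Real.rpow_nonneg (abs_nonneg _) _
  rcases le_or_gt (|b|) (δ * |a|) with hb | hb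
  · -- small b
    have hub : |a + b| ^ p ≤ (1 + ε) * |a| ^ p := by
      have h3 : |a + b| ≤ (1 + δ) * |a| := by
        calc |a + b| ≤ |a| + |b| := abs_add_le _ _
          _ ≤ |a| + δ * |a| := by linarith
          _ = (1 + δ) * |a| := by ring
      calc |a + b| ^ p ≤ ((1 + δ) * |a|) ^ p :=
            Real.rpow_le_rpow (abs_nonneg _) h3 (by linarith)
        _ = (1 + δ) ^ p * |a| ^ p := Real.mul_rpow (by linarith) (abs_nonneg _)
        _ ≤ (1 + δ) ^ tp * |a| ^ p :=
            mul_le_mul_of_nonneg_right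
              (Real.rpow_le_rpow_of_exponent_le (by linarith) hptp) hap
        _ ≤ (1 + ε) * |a| ^ p := mul_le_mul_of_nonneg_right h1.le hap
    have hlb : (1 - ε) * |a| ^ p ≤ |a + b| ^ p := by
      have h4 : |a| - |a + b| ≤ |b| := by
        have := abs_sub_abs_le_abs_sub a (a + b)
        simpa using this
      have h3 : (1 - δ) * |a| ≤ |a + b| := by nlinarith [abs_nonneg a]
      calc (1 - ε) * |a| ^ p ≤ (1 - δ) ^ tp * |a| ^ p := mul_le_mul_of_nonneg_right h2.le hap
        _ ≤ (1 - δ) ^ p * |a| ^ p :=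
            mul_le_mul_of_nonneg_right
              (Real.rpow_le_rpow_of_exponent_ge (by linarith) (by linarith) hptp) hap
        _ = ((1 - δ) * |a|) ^ p := (Real.mul_rpow (by linarith) (abs_nonneg _)).symm
        _ ≤ |a + b| ^ p :=
            Real.rpow_le_rpow (mul_nonneg (by linarith) (abs_nonneg _)) h3 (by linarith)
    have hmain : |(|a + b| ^ p - |a| ^ p)| ≤ ε * |a| ^ p := by
      rw [abs_le]; constructor <;> nlinarith
    have := mul_nonneg hK0 hbp
    linarith
  · -- big b
    have hinvδ : (1:ℝ) ≤ 1 / δ := by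
      rw [le_div_iff₀ hδpos]; linarith
    have ha : |a| ≤ (1 / δ) * |b| := by
      rw [div_mul_eq_mul_div, le_div_iff₀ hδpos]
      nlinarith
    have h5 : |a| ^ p ≤ (1 / δ) ^ tp * |b| ^ p := by
      calc |a| ^ p ≤ ((1 / δ) * |b|) ^ p :=
            Real.rpow_le_rpow (abs_nonneg _) ha (by linarith)
        _ = (1 / δ) ^ p * |b| ^ p := Real.mul_rpow (by positivity) (abs_nonneg _)
        _ ≤ (1 / δ) ^ tp * |b| ^ p :=
            mul_le_mul_of_nonneg_right
              (Real.rpow_le_rpow_of_exponent_le hinvδ hptp) hbp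
    have h6 : |a + b| ^ p ≤ (1 + 1 / δ) ^ tp * |b| ^ p := by
      have h3 : |a + b| ≤ (1 + 1 / δ) * |b| := by
        calc |a + b| ≤ |a| + |b| := abs_add_le _ _
          _ ≤ (1 / δ) * |b| + |b| := by linarith
          _ = (1 + 1 / δ) * |b| := by ring
      calc |a + b| ^ p ≤ ((1 + 1 / δ) * |b|) ^ p :=
            Real.rpow_le_rpow (abs_nonneg _) h3 (by linarith)
        _ = (1 + 1 / δ) ^ p * |b| ^ p := Real.mul_rpow (by positivity) (abs_nonneg _)
        _ ≤ (1 + 1 / δ) ^ tp * |b| ^ p :=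
            mul_le_mul_of_nonneg_right
              (Real.rpow_le_rpow_of_exponent_le (by linarith) hptp) hbp
    have habs : |(|a + b| ^ p - |a| ^ p)| ≤ |a + b| ^ p + |a| ^ p := by
      have h7 : (0:ℝ) ≤ |a + b| ^ p := Real.rpow_nonneg (abs_nonneg _) _
      rw [abs_le]; constructor <;> linarith
    have := mul_nonneg hε.le hap
    nlinarith

/-- Brezis–Lieb lemma in variable exponent Lebesgue spaces. -/
theorem stmt3 {N : ℕ} (Ω : Set (EuclideanSpace ℝ (Fin N))) (hΩ : MeasurableSet Ω)
    (hfin : volume Ω < ⊤)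
    (t : EuclideanSpace ℝ (Fin N) → ℝ) (ht : Measurable t)
    (tm tp : ℝ) (htm : 1 < tm)
    (htb : ∀ᵐ x ∂(volume.restrict Ω), tm ≤ t x ∧ t x ≤ tp)
    (f : EuclideanSpace ℝ (Fin N) → ℝ) (hf : Measurable f)
    (F : ℕ → EuclideanSpace ℝ (Fin N) → ℝ) (hFmeas : ∀ n, Measurable (F n))
    (hint : ∀ n, IntegrableOn (fun x => |F n x| ^ t x) Ω)
    (C : ℝ) (hbound : ∀ n, (∫ x in Ω, |F n x| ^ t x) ≤ C)
    (hae : ∀ᵐ x ∂(volume.restrict Ω), Tendsto (fun n => F n x) atTop (𝓝 (f x))) :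
    IntegrableOn (fun x => |f x| ^ t x) Ω ∧
    Tendsto (fun n => ∫ x in Ω, abs (|F n x| ^ t x - |F n x - f x| ^ t x - |f x| ^ t x))
      atTop (𝓝 0) := by
  set μ := volume.restrict Ω with hμdef
  set T : ℝ := max tp 1 with hTdef
  have hT1 : (1:ℝ) ≤ T := le_max_right _ _
  have htb' : ∀ᵐ x ∂μ, 1 ≤ t x ∧ t x ≤ T := by
    filter_upwards [htb] with x ⟨h1, h2⟩
    exact ⟨le_trans htm.le h1, le_trans h2 (le_max_left _ _)⟩
  -- measurability
  have hgmeas : ∀ n, Measurable (fun x => |F n x| ^ t x) := fun n => ((hFmeas n).abs).pow ht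
  have hfm : Measurable (fun x => |f x| ^ t x) := hf.abs.pow ht
  have hsmeas : ∀ n, Measurable (fun x => |F n x - f x| ^ t x) := fun n =>
    ((hFmeas n).sub hf).abs.pow ht
  have hnn : ∀ n, 0 ≤ᵐ[μ] fun x => |F n x| ^ t x :=
    fun n => Eventually.of_forall fun x => Real.rpow_nonneg (abs_nonneg _) _
  have hC0 : 0 ≤ C := le_trans (integral_nonneg fun x => Real.rpow_nonneg (abs_nonneg _) _)
    (hbound 0)
  -- pointwise convergence of |F n|^t to |f|^t a.e.
  have hptwise : ∀ᵐ x ∂μ, Tendsto (fun n => |F n x| ^ t x) atTop (𝓝 (|f x| ^ t x)) := by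
    filter_upwards [hae, htb'] with x hx ⟨h1, h2⟩
    have hpt : (0:ℝ) < t x := lt_of_lt_of_le one_pos h1
    have hc : ContinuousAt (fun y : ℝ => |y| ^ t x) (f x) := by
      have h := Real.continuousAt_rpow_const (|f x|) (t x) (Or.inr hpt.le)
      exact h.comp continuous_abs.continuousAt
    exact hc.tendsto.comp hx
  -- Fatou: integrability of |f|^t and integral bound
  have hlin : ∀ n, ∫⁻ x, ENNReal.ofReal (|F n x| ^ t x) ∂μ
      = ENNReal.ofReal (∫ x, |F n x| ^ t x ∂μ) :=
    fun n => (ofReal_integral_eq_lintegral_ofReal (hint n) (hnn n)).symm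
  have hlb : ∀ n, ∫⁻ x, ENNReal.ofReal (|F n x| ^ t x) ∂μ ≤ ENNReal.ofReal C := fun n => by
    rw [hlin n]; exact ENNReal.ofReal_le_ofReal (hbound n)
  have hfat : ∫⁻ x, ENNReal.ofReal (|f x| ^ t x) ∂μ ≤ ENNReal.ofReal C := by
    calc ∫⁻ x, ENNReal.ofReal (|f x| ^ t x) ∂μ
        = ∫⁻ x, liminf (fun n => ENNReal.ofReal (|F n x| ^ t x)) atTop ∂μ := by
          refine lintegral_congr_ae ?_
          filter_upwards [hptwise] with x hx
          exact ((ENNReal.continuous_ofReal.continuousAt).tendsto.comp hx).liminf_eq.symm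
      _ ≤ liminf (fun n => ∫⁻ x, ENNReal.ofReal (|F n x| ^ t x) ∂μ) atTop :=
          lintegral_liminf_le fun n => (hgmeas n).ennreal_ofReal
      _ ≤ ENNReal.ofReal C := by
          refine le_trans (liminf_le_liminf (Eventually.of_forall hlb)) ?_
          simp [liminf_const]
  have hfint : Integrable (fun x => |f x| ^ t x) μ := by
    refine ⟨hfm.aestronglyMeasurable, ?_⟩
    rw [hasFiniteIntegral_iff_ofReal
      (Eventually.of_forall fun x => Real.rpow_nonneg (abs_nonneg _) _)]
    exact lt_of_le_of_lt hfat ENNReal.ofReal_lt_top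
  have hfC : ∫ x, |f x| ^ t x ∂μ ≤ C := by
    have h := (ofReal_integral_eq_lintegral_ofReal hfint
      (Eventually.of_forall fun x => Real.rpow_nonneg (abs_nonneg _) _))
    rw [← h] at hfat
    exact (ENNReal.ofReal_le_ofReal_iff hC0).1 hfat
  -- the difference |F n - f|^t : integrability and bound
  have hsub_bound : ∀ n, ∀ᵐ x ∂μ,
      |F n x - f x| ^ t x ≤ (2:ℝ) ^ T * (|F n x| ^ t x + |f x| ^ t x) := by
    intro n
    filter_upwards [htb'] with x ⟨h1, h2⟩
    have hmax : |F n x - f x| ≤ 2 * max |F n x| |f x| := by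
      have := abs_sub (F n x) (f x)
      have h3 := le_max_left |F n x| |f x|
      have h4 := le_max_right |F n x| |f x|
      linarith
    have hmaxnn : (0:ℝ) ≤ max |F n x| |f x| := le_trans (abs_nonneg _) (le_max_left _ _)
    calc |F n x - f x| ^ t x ≤ (2 * max |F n x| |f x|) ^ t x :=
          Real.rpow_le_rpow (abs_nonneg _) hmax (by linarith)
      _ = 2 ^ t x * (max |F n x| |f x|) ^ t x := Real.mul_rpow (by norm_num) hmaxnn
      _ ≤ 2 ^ T * (|F n x| ^ t x + |f x| ^ t x) := by
          refine mul_le_mul (Real.rpow_le_rpow_of_exponent_le one_le_two h2) ?_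
            (Real.rpow_nonneg hmaxnn _) (by positivity)
          rcases max_choice |F n x| |f x| with h | h <;> rw [h]
          · nlinarith [Real.rpow_nonneg (abs_nonneg (f x)) (t x)]
          · nlinarith [Real.rpow_nonneg (abs_nonneg (F n x)) (t x)]
  have hsub_int : ∀ n, Integrable (fun x => |F n x - f x| ^ t x) μ := by
    intro n
    refine Integrable.mono' (((hint n).add hfint).const_mul ((2:ℝ) ^ T))
      (hsmeas n).aestronglyMeasurable ?_
    filter_upwards [hsub_bound n] with x hx
    rw [Real.norm_eq_abs, abs_of_nonneg (Real.rpow_nonneg (abs_nonneg _) _)]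
    exact hx
  set D : ℝ := (2:ℝ) ^ T * (C + C) with hDdef
  have hDb : ∀ n, ∫ x, |F n x - f x| ^ t x ∂μ ≤ D := by
    intro n
    calc ∫ x, |F n x - f x| ^ t x ∂μ
        ≤ ∫ x, (2:ℝ) ^ T * (|F n x| ^ t x + |f x| ^ t x) ∂μ :=
          integral_mono_ae (hsub_int n) (((hint n).add hfint).const_mul _) (hsub_bound n)
      _ = (2:ℝ) ^ T * ((∫ x, |F n x| ^ t x ∂μ) + ∫ x, |f x| ^ t x ∂μ) := by
          rw [integral_const_mul, integral_add (hint n) hfint]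
      _ ≤ D := by
          have h2T : (0:ℝ) ≤ (2:ℝ) ^ T := by positivity
          have := hbound n
          rw [hDdef]
          nlinarith
  have hD0 : 0 ≤ D :=
    le_trans (integral_nonneg fun x => Real.rpow_nonneg (abs_nonneg _) _) (hDb 0)
  -- integrability of the inner function
  have hinner_int : ∀ n, Integrable
      (fun x => |F n x| ^ t x - |F n x - f x| ^ t x - |f x| ^ t x) μ :=
    fun n => ((hint n).sub (hsub_int n)).sub hfint
  -- main estimate: for every ε > 0, eventually the integral is < ε
  have main : ∀ ε : ℝ, 0 < ε → ∀ᶠ n in atTop,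
      (∫ x, |(|F n x| ^ t x - |F n x - f x| ^ t x - |f x| ^ t x)| ∂μ) < ε := by
    intro ε hε
    set ε' : ℝ := ε / (2 * (D + 1)) with hε'def
    have hε'pos : 0 < ε' := by positivity
    obtain ⟨K, hK0, hK⟩ := key_ineq T hT1 hε'pos
    set W : ℕ → EuclideanSpace ℝ (Fin N) → ℝ := fun n x =>
      max (|(|F n x| ^ t x - |F n x - f x| ^ t x - |f x| ^ t x)| - ε' * |F n x - f x| ^ t x) 0
      with hWdef
    have hWmeas : ∀ n, Measurable (W n) := fun n =>
      ((((hgmeas n).sub (hsmeas n)).sub hfm).abs.sub ((hsmeas n).const_mul ε')).max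
        measurable_const
    have hWnn : ∀ n x, 0 ≤ W n x := fun n x => le_max_right _ _
    have hWbound : ∀ n, ∀ᵐ x ∂μ, ‖W n x‖ ≤ (K + 1) * |f x| ^ t x := by
      intro n
      filter_upwards [htb'] with x ⟨h1, h2⟩
      have hkey := hK (t x) h1 h2 (F n x - f x) (f x)
      rw [sub_add_cancel] at hkey
      have hfp : (0:ℝ) ≤ |f x| ^ t x := Real.rpow_nonneg (abs_nonneg _) _
      have htri : |(|F n x| ^ t x - |F n x - f x| ^ t x - |f x| ^ t x)|
          ≤ |(|F n x| ^ t x - |F n x - f x| ^ t x)| + |f x| ^ t x := by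
        have := abs_sub (|F n x| ^ t x - |F n x - f x| ^ t x) (|f x| ^ t x)
        rw [abs_of_nonneg hfp] at this
        exact this
      have hWle : W n x ≤ (K + 1) * |f x| ^ t x := by
        refine max_le (by nlinarith) (by nlinarith)
      rw [Real.norm_eq_abs, abs_of_nonneg (hWnn n x)]
      exact hWle
    have hWtend : ∀ᵐ x ∂μ, Tendsto (fun n => W n x) atTop (𝓝 0) := by
      filter_upwards [hae, htb', hptwise] with x hx ⟨h1, h2⟩ hg
      have hpt : (0:ℝ) < t x := lt_of_lt_of_le one_pos h1
      have h0 : Tendsto (fun n => |F n x - f x| ^ t x) atTop (𝓝 0) := by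
        have hc : ContinuousAt (fun y : ℝ => |y| ^ t x) 0 := by
          have h := Real.continuousAt_rpow_const (|(0:ℝ)|) (t x) (Or.inr hpt.le)
          exact h.comp continuous_abs.continuousAt
        have hsub0 : Tendsto (fun n => F n x - f x) atTop (𝓝 0) := by
          simpa using hx.sub (tendsto_const_nhds (x := f x))
        have := hc.tendsto.comp hsub0
        simpa [Function.comp_def, Real.zero_rpow (ne_of_gt hpt)] using this
      have hin : Tendsto (fun n => |F n x| ^ t x - |F n x - f x| ^ t x - |f x| ^ t x)
          atTop (𝓝 0) := by
        have := (hg.sub h0).sub (tendsto_const_nhds (x := |f x| ^ t x))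
        simpa using this
      have habs : Tendsto (fun n =>
          |(|F n x| ^ t x - |F n x - f x| ^ t x - |f x| ^ t x)|) atTop (𝓝 0) := by
        simpa using hin.abs
      have hfull : Tendsto (fun n =>
          |(|F n x| ^ t x - |F n x - f x| ^ t x - |f x| ^ t x)|
            - ε' * |F n x - f x| ^ t x) atTop (𝓝 0) := by
        have := habs.sub (h0.const_mul ε')
        simpa using this
      have := hfull.max (tendsto_const_nhds (x := (0:ℝ)))
      simpa using this
    have hWint : ∀ n, Integrable (W n) μ := fun n =>
      Integrable.mono' (hfint.const_mul (K + 1)) (hWmeas n).aestronglyMeasurable (hWbound n)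
    have hWto : Tendsto (fun n => ∫ x, W n x ∂μ) atTop (𝓝 0) := by
      have h := tendsto_integral_of_dominated_convergence
        (fun x => (K + 1) * |f x| ^ t x)
        (fun n => (hWmeas n).aestronglyMeasurable)
        (hfint.const_mul (K + 1)) hWbound hWtend
      simpa using h
    have hWev : ∀ᶠ n in atTop, ∫ x, W n x ∂μ < ε / 2 := by
      have := (Metric.tendsto_atTop.1 hWto) (ε / 2) (by positivity)
      obtain ⟨Nn, hNn⟩ := this
      refine eventually_atTop.2 ⟨Nn, fun n hn => ?_⟩
      have := hNn n hn
      rw [Real.dist_eq, sub_zero] at this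
      exact lt_of_le_of_lt (le_abs_self _) this
    have hε'D : ε' * D ≤ ε / 2 := by
      rw [hε'def, div_mul_eq_mul_div, div_le_div_iff₀ (by positivity) two_pos]
      nlinarith
    filter_upwards [hWev] with n hWn
    have hptle : ∀ᵐ x ∂μ, |(|F n x| ^ t x - |F n x - f x| ^ t x - |f x| ^ t x)|
        ≤ W n x + ε' * |F n x - f x| ^ t x := by
      refine Eventually.of_forall fun x => ?_
      have := le_max_left (|(|F n x| ^ t x - |F n x - f x| ^ t x - |f x| ^ t x)|
        - ε' * |F n x - f x| ^ t x) (0:ℝ)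
      rw [hWdef]
      dsimp only
      linarith
    have hle : (∫ x, |(|F n x| ^ t x - |F n x - f x| ^ t x - |f x| ^ t x)| ∂μ)
        ≤ (∫ x, W n x ∂μ) + ε' * ∫ x, |F n x - f x| ^ t x ∂μ := by
      calc (∫ x, |(|F n x| ^ t x - |F n x - f x| ^ t x - |f x| ^ t x)| ∂μ)
          ≤ ∫ x, (W n x + ε' * |F n x - f x| ^ t x) ∂μ :=
            integral_mono_ae (hinner_int n).abs
              ((hWint n).add ((hsub_int n).const_mul ε')) hptle
        _ = (∫ x, W n x ∂μ) + ε' * ∫ x, |F n x - f x| ^ t x ∂μ := by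
            rw [integral_add (hWint n) ((hsub_int n).const_mul ε'), integral_const_mul]
    have h2 : ε' * ∫ x, |F n x - f x| ^ t x ∂μ ≤ ε' * D :=
      mul_le_mul_of_nonneg_left (hDb n) hε'pos.le
    calc (∫ x, |(|F n x| ^ t x - |F n x - f x| ^ t x - |f x| ^ t x)| ∂μ)
        ≤ (∫ x, W n x ∂μ) + ε' * ∫ x, |F n x - f x| ^ t x ∂μ := hle
      _ < ε / 2 + ε / 2 := by
          have := le_trans h2 hε'D
          linarith
      _ = ε := by ring
  refine ⟨hfint, ?_⟩
  rw [Metric.tendsto_atTop]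
  intro ε hε
  obtain ⟨Nn, hNn⟩ := eventually_atTop.1 (main ε hε)
  refine ⟨Nn, fun n hn => ?_⟩
  rw [Real.dist_eq, sub_zero, abs_of_nonneg (integral_nonneg fun x => abs_nonneg _)]
  exact hNn n hn
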